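/- If X +_f W, Y, and Z are Hausdorff and ϖ : Z → W is injective, then the pullback space Y +_{f*} Z is Hausdorff. -/
import Mathlib


open Set Topology

variable {X Y : Type*} [TopologicalSpace X] [TopologicalSpace Y]

/-- A map on subsets is *admissible* if it sends closed sets to closed sets,
the empty set to the empty set, and is finitely additive on closed sets. -/
def Admissible (f : Set X → Set Y) : Prop :=
  (∀ A : Set X, IsClosed A → IsClosed (f A)) ∧ f ∅ = ∅ ∧
    ∀ A B : Set X, IsClosed A → IsClosed B → f (A ∪ B) = f A ∪ f B

/-- The defining condition for a subset of `X ⊕ Y` to be closed in the sum space `X +_f Y`. -/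
def SumClosed (f : Set X → Set Y) (A : Set (X ⊕ Y)) : Prop :=
  IsClosed (Sum.inl ⁻¹' A) ∧ IsClosed (Sum.inr ⁻¹' A) ∧
    f (Sum.inl ⁻¹' A) ⊆ Sum.inr ⁻¹' A

theorem Admissible.mono {f : Set X → Set Y} (hf : Admissible f) {A B : Set X}
    (hA : IsClosed A) (hB : IsClosed B) (hAB : A ⊆ B) : f A ⊆ f B := by
  have h := hf.2.2 A B hA hB
  rw [union_eq_right.mpr hAB] at h
  rw [h]; exact subset_union_left

/-- The sum space `X +_f Y`. -/
def sumTopology (f : Set X → Set Y) (hf : Admissible f) : TopologicalSpace (X ⊕ Y) where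
  IsOpen s := SumClosed f sᶜ
  isOpen_univ := by
    refine ⟨?_, ?_, ?_⟩ <;> simp [hf.2.1]
  isOpen_inter := by
    rintro s t ⟨hs1, hs2, hs3⟩ ⟨ht1, ht2, ht3⟩
    refine ⟨?_, ?_, ?_⟩
    · simpa [compl_inter, preimage_union] using hs1.union ht1
    · simpa [compl_inter, preimage_union] using hs2.union ht2
    · rw [compl_inter, preimage_union, preimage_union, hf.2.2 _ _ hs1 ht1]
      exact union_subset_union hs3 ht3
  isOpen_sUnion := by
    intro S hS
    have hc : (⋃₀ S)ᶜ = ⋂ s ∈ S, sᶜ := by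
      rw [compl_sUnion, sInter_image]
    have h1 : IsClosed (Sum.inl ⁻¹' (⋃₀ S)ᶜ) := by
      rw [hc, preimage_iInter₂]
      exact isClosed_biInter fun s hs => (hS s hs).1
    have h2 : IsClosed (Sum.inr ⁻¹' (⋃₀ S)ᶜ) := by
      rw [hc, preimage_iInter₂]
      exact isClosed_biInter fun s hs => (hS s hs).2.1
    refine ⟨h1, h2, ?_⟩
    rw [hc, preimage_iInter₂, preimage_iInter₂]
    refine subset_iInter₂ fun s hs => ?_
    have h1' : IsClosed (⋂ i ∈ S, Sum.inl ⁻¹' iᶜ) := by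
      exact isClosed_biInter fun i hi => (hS i hi).1
    calc f (⋂ i ∈ S, Sum.inl ⁻¹' iᶜ) ⊆ f (Sum.inl ⁻¹' sᶜ) :=
          hf.mono h1' (hS s hs).1 (iInter₂_subset s hs)
      _ ⊆ Sum.inr ⁻¹' sᶜ := (hS s hs).2.2

theorem isClosed_sumTopology {f : Set X → Set Y} (hf : Admissible f) (A : Set (X ⊕ Y)) :
    IsClosed[sumTopology f hf] A ↔ SumClosed f A := by
  rw [← @isOpen_compl_iff _ _ (sumTopology f hf)]
  show SumClosed f Aᶜᶜ ↔ _
  rw [compl_compl]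

/-- if `X +_f W`, `Y`, `Z` are Hausdorff and `ϖ` is injective, then
`Y +_{f*} Z` is Hausdorff. -/
theorem statement13 {Z W : Type*} [TopologicalSpace Z] [TopologicalSpace W]
    [T2Space Y] [T2Space Z]
    (f : Set X → Set W) (hf : Admissible f)
    (h2 : @T2Space _ (sumTopology f hf))
    (π : Y → X) (ϖ : Z → W) (hπ : Continuous π) (hϖ : Continuous ϖ)
    (hinj : Function.Injective ϖ)
    (hstar : Admissible (fun A : Set Y => ϖ ⁻¹' (f (closure (π '' A))))) :
    @T2Space _ (sumTopology (fun A : Set Y => ϖ ⁻¹' (f (closure (π '' A)))) hstar) := by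

  set f' := fun A : Set Y => ϖ ⁻¹' (f (closure (π '' A))) with hf'def
  letI t := sumTopology f' hstar
  letI tXW := sumTopology f hf
  have hopen : ∀ U : Set Y, IsOpen U → IsOpen[t] (Sum.inl '' U) := by
    intro U hU
    show SumClosed f' (Sum.inl '' U)ᶜ
    have e2 : Sum.inr ⁻¹' (Sum.inl '' U)ᶜ = (univ : Set Z) := by ext z; simp
    refine ⟨?_, ?_, ?_⟩
    · have e1 : Sum.inl ⁻¹' ((Sum.inl '' U : Set (Y ⊕ Z)))ᶜ = Uᶜ := by ext y; simp
      rw [e1]; exact hU.isClosed_compl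
    · rw [e2]; exact isClosed_univ
    · rw [e2]; exact subset_univ _
  have hp : Continuous[t, tXW] (Sum.map π ϖ) := by
    rw [continuous_def]
    intro s hs
    obtain ⟨h1, h2', h3⟩ := hs
    show SumClosed f' (Sum.map π ϖ ⁻¹' s)ᶜ
    have e1 : Sum.inl ⁻¹' (Sum.map π ϖ ⁻¹' s)ᶜ = π ⁻¹' (Sum.inl ⁻¹' sᶜ) := by
      ext y; simp
    have e2 : Sum.inr ⁻¹' (Sum.map π ϖ ⁻¹' s)ᶜ = ϖ ⁻¹' (Sum.inr ⁻¹' sᶜ) := by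
      ext z; simp
    refine ⟨?_, ?_, ?_⟩
    · rw [e1]; exact h1.preimage hπ
    · rw [e2]; exact h2'.preimage hϖ
    · rw [e1, e2]
      intro z hz
      apply h3
      have hsub : closure (π '' (π ⁻¹' (Sum.inl ⁻¹' sᶜ))) ⊆ Sum.inl ⁻¹' sᶜ :=
        closure_minimal (image_preimage_subset _ _) h1
      exact hf.mono isClosed_closure h1 hsub hz
  constructor
  intro a b hab
  by_cases hpab : Sum.map π ϖ a = Sum.map π ϖ b
  · match a, b with
    | Sum.inl y₁, Sum.inl y₂ =>
        have hy : y₁ ≠ y₂ := fun h => hab (by rw [h])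
        obtain ⟨U, V, hU, hV, hyU, hyV, hUV⟩ := t2_separation hy
        refine ⟨Sum.inl '' U, Sum.inl '' V, hopen U hU, hopen V hV,
          ⟨y₁, hyU, rfl⟩, ⟨y₂, hyV, rfl⟩, ?_⟩
        rw [disjoint_iff_inter_eq_empty] at hUV ⊢
        rw [← image_inter Sum.inl_injective, hUV, image_empty]
    | Sum.inl y, Sum.inr z =>
        rw [Sum.map_inl, Sum.map_inr] at hpab
        exact (Sum.inl_ne_inr hpab).elim
    | Sum.inr z, Sum.inl y =>
        rw [Sum.map_inr, Sum.map_inl] at hpab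
        exact (Sum.inr_ne_inl hpab).elim
    | Sum.inr z₁, Sum.inr z₂ =>
        rw [Sum.map_inr, Sum.map_inr, Sum.inr.injEq] at hpab
        exact absurd (congrArg Sum.inr (hinj hpab)) hab
  · obtain ⟨U, V, hU, hV, haU, hbV, hUV⟩ := @t2_separation _ tXW h2 _ _ hpab
    exact ⟨_, _, hp.isOpen_preimage U hU, hp.isOpen_preimage V hV, haU, hbV,
      hUV.preimage _⟩
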